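/- arXiv:1706.05595 — 2 statements merged into one kernel-verified Lean document; each statement's English description precedes it below -/
import Mathlib

section
/- For every Hist T of the Petersen graph, the subgraph P - E(T) is a single cycle of length 6. -/
open SimpleGraph

/-- The Petersen graph as the Kneser graph K(5,2). -/
def petersen : SimpleGraph {s : Finset (Fin 5) // s.card = 2} where
  Adj a b := Disjoint a.1 b.1
  symm := ⟨fun a b h => h.symm⟩
  loopless := ⟨fun a h => by
    have h2 : a.1 = ⊥ := disjoint_self.mp h
    have hc := a.2
    rw [h2] at hc
    simp at hc⟩

abbrev PV := {s : Finset (Fin 5) // s.card = 2}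

instance : DecidableRel petersen.Adj := fun a b => inferInstanceAs (Decidable (Disjoint a.1 b.1))

def v01 : PV := ⟨{0,1}, by decide⟩
def v02 : PV := ⟨{0,2}, by decide⟩
def v03 : PV := ⟨{0,3}, by decide⟩
def v04 : PV := ⟨{0,4}, by decide⟩
def v12 : PV := ⟨{1,2}, by decide⟩
def v13 : PV := ⟨{1,3}, by decide⟩
def v14 : PV := ⟨{1,4}, by decide⟩
def v23 : PV := ⟨{2,3}, by decide⟩
def v24 : PV := ⟨{2,4}, by decide⟩
def v34 : PV := ⟨{3,4}, by decide⟩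

def vL : Fin 10 → PV := ![v01, v02, v03, v04, v12, v13, v14, v23, v24, v34]
def eL : Fin 15 → Sym2 PV := ![s(v01,v23), s(v01,v24), s(v01,v34), s(v02,v13), s(v02,v14), s(v02,v34), s(v03,v12), s(v03,v14), s(v03,v24), s(v04,v12), s(v04,v13), s(v04,v23), s(v12,v34), s(v13,v24), s(v14,v23)]

def m : Fin 10 → Fin 15 → Bool := ![
  ![true, true, true, false, false, false, false, false, false, false, false, false, false, false, false],
  ![false, false, false, true, true, true, false, false, false, false, false, false, false, false, false],
  ![false, false, false, false, false, false, true, true, true, false, false, false, false, false, false],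
  ![false, false, false, false, false, false, false, false, false, true, true, true, false, false, false],
  ![false, false, false, false, false, false, true, false, false, true, false, false, true, false, false],
  ![false, false, false, true, false, false, false, false, false, false, true, false, false, true, false],
  ![false, false, false, false, true, false, false, true, false, false, false, false, false, false, true],
  ![true, false, false, false, false, false, false, false, false, false, false, true, false, false, true],
  ![false, true, false, false, false, false, false, false, true, false, false, false, false, true, false],
  ![false, false, true, false, false, true, false, false, false, false, false, false, true, false, false]]

def masks : List (List Bool) := [
  [true, true, true, false, false, false, false, false, false, false, false, false, false, false, false],
  [false, false, false, true, true, true, false, false, false, false, false, false, false, false, false],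
  [false, false, false, false, false, false, true, true, true, false, false, false, false, false, false],
  [false, false, false, false, false, false, false, false, false, true, true, true, false, false, false],
  [false, false, false, false, false, false, true, false, false, true, false, false, true, false, false],
  [false, false, false, true, false, false, false, false, false, false, true, false, false, true, false],
  [false, false, false, false, true, false, false, true, false, false, false, false, false, false, true],
  [true, false, false, false, false, false, false, false, false, false, false, true, false, false, true],
  [false, true, false, false, false, false, false, false, true, false, false, false, false, true, false],
  [false, false, true, false, false, true, false, false, false, false, false, false, true, false, false]]

lemma masksA : masks = [List.ofFn (m 0), List.ofFn (m 1), List.ofFn (m 2), List.ofFn (m 3), List.ofFn (m 4), List.ofFn (m 5), List.ofFn (m 6), List.ofFn (m 7), List.ofFn (m 8), List.ofFn (m 9)] := by decide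

def LB : List (List Bool) := [
  List.ofFn ![true,true,false,true,true,false,false,false,false,false,false,false,false,true,true],
  List.ofFn ![true,true,false,false,false,false,true,false,true,true,false,true,false,false,false],
  List.ofFn ![true,false,true,true,false,true,false,false,false,false,true,true,false,false,false],
  List.ofFn ![true,false,true,false,false,false,true,true,false,false,false,false,true,false,true],
  List.ofFn ![false,true,true,false,true,true,false,true,true,false,false,false,false,false,false],
  List.ofFn ![false,true,true,false,false,false,false,false,false,true,true,false,true,true,false],
  List.ofFn ![false,false,false,true,true,false,true,true,false,true,true,false,false,false,false],
  List.ofFn ![false,false,false,true,false,true,true,false,true,false,false,false,true,true,false],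
  List.ofFn ![false,false,false,false,true,true,false,false,false,true,false,true,true,false,true],
  List.ofFn ![false,false,false,false,false,false,false,true,true,false,true,true,false,true,true]]

def LF : List (Finset (Fin 15)) := [({0,1,3,4,13,14} : Finset (Fin 15)), ({0,1,6,8,9,11} : Finset (Fin 15)), ({0,2,3,5,10,11} : Finset (Fin 15)), ({0,2,6,7,12,14} : Finset (Fin 15)), ({1,2,4,5,7,8} : Finset (Fin 15)), ({1,2,9,10,12,13} : Finset (Fin 15)), ({3,4,6,7,9,10} : Finset (Fin 15)), ({3,5,6,8,12,13} : Finset (Fin 15)), ({4,5,9,11,12,14} : Finset (Fin 15)), ({7,8,10,11,13,14} : Finset (Fin 15))]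

def chkL (l : List Bool) : Bool :=
  !(l.count true == 6) ||
    (!(masks.all (fun mk => (l.zipWith and mk).count true == 0 || (l.zipWith and mk).count true == 2)) ||
      LB.contains l)

set_option maxHeartbeats 2000000 in
theorem keyL : ∀ (b0 b1 b2 b3 b4 b5 b6 b7 b8 b9 b10 b11 b12 b13 b14 : Bool),
    chkL [b0,b1,b2,b3,b4,b5,b6,b7,b8,b9,b10,b11,b12,b13,b14] = true := by decide

lemma countA {n : ℕ} (p : Fin n → Prop) [DecidablePred p] :
    (List.ofFn (fun i => decide (p i))).count true = (Finset.univ.filter p).card := by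
  rw [List.ofFn_eq_map, List.count_eq_countP, List.countP_map,
    Finset.card_def, Finset.filter_val, Fin.univ_def]
  rw [← Multiset.countP_eq_card_filter]
  simp [Multiset.countP, List.countP, Function.comp]
  rfl

lemma zipA {n : ℕ} (a b : Fin n → Bool) :
    (List.ofFn a).zipWith and (List.ofFn b) = List.ofFn (fun i => a i && b i) := by
  apply List.ext_getElem
  · simp
  · intro i h1 h2
    simp

lemma petersen_deg : ∀ v, petersen.degree v = 3 := by decide

lemma six_cycle {V : Type*} [DecidableEq V] [Fintype V] (G : SimpleGraph V) [Fintype G.edgeSet]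
    (a b c d e f : V)
    (hE : G.edgeFinset = {s(a,b), s(b,c), s(c,d), s(d,e), s(e,f), s(f,a)})
    (hnd : ([a,b,c,d,e,f] : List V).Nodup) :
    ∃ (v : V) (w : G.Walk v v),
      w.IsCycle ∧ w.length = 6 ∧ G.edgeSet = {x | x ∈ w.edges} := by
  simp only [List.nodup_cons, List.mem_cons, List.not_mem_nil, or_false, List.mem_singleton,
    List.nodup_nil, and_true, not_or] at hnd
  obtain ⟨⟨hab, hac, had, hae, haf⟩, ⟨hbc, hbd, hbe, hbf⟩, ⟨hcd, hce, hcf⟩, ⟨hde, hdf⟩, hef⟩ := hnd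
  have mem : ∀ x y : V, s(x,y) ∈ ({s(a,b), s(b,c), s(c,d), s(d,e), s(e,f), s(f,a)} : Finset (Sym2 V)) → G.Adj x y := by
    intro x y h
    rw [← hE, mem_edgeFinset] at h
    exact h
  have Aab : G.Adj a b := mem a b (by simp)
  have Abc : G.Adj b c := mem b c (by simp)
  have Acd : G.Adj c d := mem c d (by simp)
  have Ade : G.Adj d e := mem d e (by simp)
  have Aef : G.Adj e f := mem e f (by simp)
  have Afa : G.Adj f a := mem f a (by simp)
  refine ⟨a, .cons Aab (.cons Abc (.cons Acd (.cons Ade (.cons Aef (.cons Afa .nil))))), ?_, ?_, ?_⟩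
  · rw [Walk.isCycle_def]
    refine ⟨⟨?_⟩, by simp, ?_⟩
    · simp [Walk.edges, Sym2.eq_iff]
      aesop
    · simp [Walk.support]
      aesop
  · rfl
  · rw [← coe_edgeFinset, hE]
    ext x
    simp [Walk.edges]

set_option maxHeartbeats 4000000 in
/-- For every Hist `T` of the Petersen graph, `P - E(T)` is a single
cycle of length 6. -/
theorem stmt8 (T : SimpleGraph {s : Finset (Fin 5) // s.card = 2})
    (hle : T ≤ petersen) (htree : T.IsTree)
    (hdeg : ∀ v, (T.neighborSet v).ncard = 1 ∨ (T.neighborSet v).ncard = 3) :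
    ∃ (v : {s : Finset (Fin 5) // s.card = 2}) (c : (petersen \ T).Walk v v),
      c.IsCycle ∧ c.length = 6 ∧ (petersen \ T).edgeSet = {e | e ∈ c.edges} := by
  haveI : DecidableRel T.Adj := Classical.decRel _
  haveI : DecidableRel (petersen \ T).Adj := fun a b => instDecidableAnd
  have hTP : T.edgeFinset ⊆ petersen.edgeFinset := by
    intro e he
    rw [mem_edgeFinset] at *
    exact edgeSet_mono hle he
  have h9 : T.edgeFinset.card = 9 := by
    have h := htree.card_edgeFinset
    have hV : Fintype.card PV = 10 := by decide
    simp only [hV] at h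
    omega
  have hDF : (petersen \ T).edgeFinset = petersen.edgeFinset \ T.edgeFinset := by
    ext x
    simp [mem_edgeFinset, edgeSet_sdiff]
  have h15 : petersen.edgeFinset.card = 15 := by decide
  have h6 : (petersen \ T).edgeFinset.card = 6 := by
    rw [hDF, Finset.card_sdiff_of_subset hTP, h15, h9]
  have hdegD : ∀ v : PV, (petersen \ T).degree v = 0 ∨ (petersen \ T).degree v = 2 := by
    intro v
    have hnb : (petersen \ T).neighborFinset v = petersen.neighborFinset v \ T.neighborFinset v := by
      ext w
      simp [mem_neighborFinset, sdiff_adj]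
    have hsub : T.neighborFinset v ⊆ petersen.neighborFinset v := by
      intro w hw
      rw [mem_neighborFinset] at *
      exact hle hw
    have hTd : T.degree v = 1 ∨ T.degree v = 3 := by
      have := hdeg v
      rwa [Set.ncard_eq_toFinset_card', ← neighborFinset_def] at this
    have hPd : petersen.degree v = 3 := petersen_deg v
    unfold SimpleGraph.degree at *
    rw [hnb, Finset.card_sdiff_of_subset hsub, hPd]
    omega
  have hinc : ∀ v : PV, (((petersen \ T).edgeFinset.filter (fun e => v ∈ e)).card = 0 ∨
      ((petersen \ T).edgeFinset.filter (fun e => v ∈ e)).card = 2) := by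
    intro v
    have : (petersen \ T).edgeFinset.filter (fun e => v ∈ e) = (petersen \ T).incidenceFinset v := by
      ext e
      simp [mem_incidenceFinset, incidenceSet, mem_edgeFinset]
    rw [this, card_incidenceFinset_eq_degree]
    exact hdegD v
  set I : Finset (Fin 15) := Finset.univ.filter (fun i => eL i ∈ (petersen \ T).edgeFinset) with hI
  have hinj : Function.Injective eL := by
    intro i j h
    revert h
    revert i j
    decide
  have hcover : petersen.edgeFinset = Finset.univ.image eL := by decide
  have hSI : (petersen \ T).edgeFinset = I.image eL := by
    ext x
    simp only [hI, Finset.mem_image, Finset.mem_filter, Finset.mem_univ, true_and]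
    constructor
    · intro hx
      have hxp : x ∈ petersen.edgeFinset := by rw [hDF] at hx; exact (Finset.mem_sdiff.mp hx).1
      rw [hcover, Finset.mem_image] at hxp
      obtain ⟨i, _, hi⟩ := hxp
      exact ⟨i, by rwa [hi], hi⟩
    · rintro ⟨i, hi, rfl⟩
      exact hi
  have hIcard : I.card = 6 := by
    have := Finset.card_image_of_injective I hinj
    rw [← hSI] at this
    omega
  have hm : ∀ (j : Fin 10) (i : Fin 15), m j i = true ↔ vL j ∈ eL i := by decide
  have hIdeg : ∀ j : Fin 10, (I.filter (fun i => m j i)).card = 0 ∨ (I.filter (fun i => m j i)).card = 2 := by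
    intro j
    have h1 : I.filter (fun i => m j i) = I.filter (fun i => vL j ∈ eL i) := by
      apply Finset.filter_congr
      intro i _
      simp [hm]
    have h2 : Finset.filter (fun e => vL j ∈ e) (I.image eL) = (I.filter (fun i => vL j ∈ eL i)).image eL :=
      Finset.filter_image
    have h3 := Finset.card_image_of_injective (I.filter (fun i => vL j ∈ eL i)) hinj
    have h4 := hinc (vL j)
    rw [hSI, h2, h3] at h4
    rw [h1]
    exact h4
  -- transfer to Bool vectors
  set g : Fin 15 → Bool := fun i => decide (eL i ∈ (petersen \ T).edgeFinset) with hg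
  have hIg : I = Finset.univ.filter (fun i => g i = true) := by
    ext i
    simp [hI, hg]
  have hcnt : (List.ofFn g).count true = 6 := by
    rw [hg, countA]
    rw [← hI] at *
    exact hIcard
  have hrow : ∀ j : Fin 10, ((List.ofFn g).zipWith and (List.ofFn (m j))).count true = 0 ∨
      ((List.ofFn g).zipWith and (List.ofFn (m j))).count true = 2 := by
    intro j
    rw [zipA]
    have hfun : (fun i => g i && m j i) = (fun i => decide ((eL i ∈ (petersen \ T).edgeFinset) ∧ m j i = true)) := by
      funext i
      simp [hg]
    rw [hfun, countA]
    have : Finset.univ.filter (fun i => (eL i ∈ (petersen \ T).edgeFinset) ∧ m j i = true) =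
        I.filter (fun i => m j i) := by
      rw [hI, Finset.filter_filter]
    rw [this]
    exact hIdeg j
  have hchk : chkL (List.ofFn g) = true := keyL (g 0) (g 1) (g 2) (g 3) (g 4) (g 5) (g 6) (g 7) (g 8) (g 9) (g 10) (g 11) (g 12) (g 13) (g 14)
  have hLB : List.ofFn g ∈ LB := by
    have hA : ((List.ofFn g).count true == 6) = true := by rw [hcnt]; rfl
    have hB : (masks.all (fun mk => ((List.ofFn g).zipWith and mk).count true == 0 ||
        ((List.ofFn g).zipWith and mk).count true == 2)) = true := by
      rw [List.all_eq_true, masksA]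
      intro mk hmk
      simp only [List.mem_cons, List.not_mem_nil, or_false] at hmk
      rcases hmk with h|h|h|h|h|h|h|h|h|h
      · subst h; simp only [Bool.or_eq_true, beq_iff_eq]; exact hrow 0
      · subst h; simp only [Bool.or_eq_true, beq_iff_eq]; exact hrow 1
      · subst h; simp only [Bool.or_eq_true, beq_iff_eq]; exact hrow 2
      · subst h; simp only [Bool.or_eq_true, beq_iff_eq]; exact hrow 3
      · subst h; simp only [Bool.or_eq_true, beq_iff_eq]; exact hrow 4
      · subst h; simp only [Bool.or_eq_true, beq_iff_eq]; exact hrow 5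
      · subst h; simp only [Bool.or_eq_true, beq_iff_eq]; exact hrow 6
      · subst h; simp only [Bool.or_eq_true, beq_iff_eq]; exact hrow 7
      · subst h; simp only [Bool.or_eq_true, beq_iff_eq]; exact hrow 8
      · subst h; simp only [Bool.or_eq_true, beq_iff_eq]; exact hrow 9
    unfold chkL at hchk
    rw [hA, hB] at hchk
    simp at hchk
    exact hchk
  have hmemLF : I ∈ LF := by
    simp only [LB, List.mem_cons, List.not_mem_nil, or_false] at hLB
    simp only [LF, List.mem_cons, List.not_mem_nil, or_false]
    rcases hLB with h|h|h|h|h|h|h|h|h|h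
    · exact Or.inl (by rw [hIg, List.ofFn_injective h]; decide)
    · exact Or.inr (Or.inl (by rw [hIg, List.ofFn_injective h]; decide))
    · exact Or.inr (Or.inr (Or.inl (by rw [hIg, List.ofFn_injective h]; decide)))
    · exact Or.inr (Or.inr (Or.inr (Or.inl (by rw [hIg, List.ofFn_injective h]; decide))))
    · exact Or.inr (Or.inr (Or.inr (Or.inr (Or.inl (by rw [hIg, List.ofFn_injective h]; decide)))))
    · exact Or.inr (Or.inr (Or.inr (Or.inr (Or.inr (Or.inl (by rw [hIg, List.ofFn_injective h]; decide))))))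
    · exact Or.inr (Or.inr (Or.inr (Or.inr (Or.inr (Or.inr (Or.inl (by rw [hIg, List.ofFn_injective h]; decide)))))))
    · exact Or.inr (Or.inr (Or.inr (Or.inr (Or.inr (Or.inr (Or.inr (Or.inl (by rw [hIg, List.ofFn_injective h]; decide))))))))
    · exact Or.inr (Or.inr (Or.inr (Or.inr (Or.inr (Or.inr (Or.inr (Or.inr (Or.inl (by rw [hIg, List.ofFn_injective h]; decide)))))))))
    · exact Or.inr (Or.inr (Or.inr (Or.inr (Or.inr (Or.inr (Or.inr (Or.inr (Or.inr ((by rw [hIg, List.ofFn_injective h]; decide))))))))))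
  simp only [LF, List.mem_cons, List.not_mem_nil, or_false] at hmemLF
  rcases hmemLF with h|h|h|h|h|h|h|h|h|h
  · exact six_cycle _ v01 v23 v14 v02 v13 v24 (by rw [hSI, h]; decide) (by decide)
  · exact six_cycle _ v01 v23 v04 v12 v03 v24 (by rw [hSI, h]; decide) (by decide)
  · exact six_cycle _ v01 v23 v04 v13 v02 v34 (by rw [hSI, h]; decide) (by decide)
  · exact six_cycle _ v01 v23 v14 v03 v12 v34 (by rw [hSI, h]; decide) (by decide)
  · exact six_cycle _ v01 v24 v03 v14 v02 v34 (by rw [hSI, h]; decide) (by decide)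
  · exact six_cycle _ v01 v24 v13 v04 v12 v34 (by rw [hSI, h]; decide) (by decide)
  · exact six_cycle _ v02 v13 v04 v12 v03 v14 (by rw [hSI, h]; decide) (by decide)
  · exact six_cycle _ v02 v13 v24 v03 v12 v34 (by rw [hSI, h]; decide) (by decide)
  · exact six_cycle _ v02 v14 v23 v04 v12 v34 (by rw [hSI, h]; decide) (by decide)
  · exact six_cycle _ v03 v14 v23 v04 v13 v24 (by rw [hSI, h]; decide) (by decide)
end

section
/- Let G be a cubic graph obtained from cubic graphs G1 and G2 by a dot product construction: delete two independent edges a1b1, a2b2 from G1, delete two adjacent vertices a3, b3 (with a3b3 an edge) from G2 where a3 has other neighbors x1,y1 and b3 has other neighbors x2,y2, and add edges a1x1, b1y1, a2x2, b2y2. If neither G1 nor G2 is 3-edge-colorable, then G is not 3-edge-colorable. -/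
open SimpleGraph

/-- A graph is 3-edge-colorable if its edges can be properly colored with 3 colors. -/
def Is3EdgeColorable {V : Type*} (G : SimpleGraph V) : Prop :=
  ∃ C : G.edgeSet → Fin 3,
    ∀ e₁ e₂ : G.edgeSet, e₁ ≠ e₂ →
      (∃ v, v ∈ (e₁ : Sym2 V) ∧ v ∈ (e₂ : Sym2 V)) → C e₁ ≠ C e₂


private lemma triple_ne {α : Type*} {s : Set α} {a b c : α} (hs : s = {a,b,c}) (h3 : s.ncard = 3) :
    a ≠ b ∧ a ≠ c ∧ b ≠ c := by
  subst hs
  refine ⟨?_, ?_, ?_⟩ <;> rintro rfl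
  · have he : ({a,a,c} : Set α) = insert a {c} := by ext; simp
    rw [he] at h3
    have := Set.ncard_insert_le a ({c} : Set α)
    simp [Set.ncard_singleton] at this; omega
  · have he : ({a,b,a} : Set α) = insert a {b} := by ext; simp; tauto
    rw [he] at h3
    have := Set.ncard_insert_le a ({b} : Set α)
    simp [Set.ncard_singleton] at this; omega
  · have he : ({a,b,b} : Set α) = insert a {b} := by ext; simp
    rw [he] at h3
    have := Set.ncard_insert_le a ({b} : Set α)
    simp [Set.ncard_singleton] at this; omega

private lemma rainbow {V : Type*} (H : SimpleGraph V) (C : H.edgeSet → Fin 3)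
    (hC : ∀ e₁ e₂ : H.edgeSet, e₁ ≠ e₂ →
      (∃ v, v ∈ (e₁ : Sym2 V) ∧ v ∈ (e₂ : Sym2 V)) → C e₁ ≠ C e₂)
    (v : V) (hv : (H.neighborSet v).ncard = 3) (α : Fin 3) :
    ∃ w, ∃ h : H.Adj v w, C ⟨s(v,w), h⟩ = α := by
  classical
  set g : V → Fin 3 := fun w => if h : H.Adj v w then C ⟨s(v,w), h⟩ else 0 with hg
  have hinj : Set.InjOn g (H.neighborSet v) := by
    intro w1 h1 w2 h2 heq
    by_contra hne
    have h1' : H.Adj v w1 := h1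
    have h2' : H.Adj v w2 := h2
    rw [hg] at heq
    simp only [dif_pos h1', dif_pos h2'] at heq
    refine hC ⟨s(v,w1), h1'⟩ ⟨s(v,w2), h2'⟩ ?_ ⟨v, by simp, by simp⟩ heq
    intro h
    exact hne (Sym2.congr_right.mp (Subtype.ext_iff.mp h))
  have himg : (g '' H.neighborSet v).ncard = 3 := by
    rw [Set.ncard_image_of_injOn hinj, hv]
  have huniv : g '' H.neighborSet v = Set.univ := by
    apply Set.eq_of_subset_of_ncard_le (Set.subset_univ _)
    rw [Set.ncard_univ, himg]; simp
  have hα : α ∈ g '' H.neighborSet v := huniv ▸ Set.mem_univ α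
  obtain ⟨w, hw, hgw⟩ := hα
  have hw' : H.Adj v w := hw
  refine ⟨w, hw', ?_⟩
  rw [hg] at hgw
  simpa [dif_pos hw'] using hgw

private lemma count_dichotomy (N : ℕ) (d1 d2 d3 d4 : Fin 3)
    (hp : ∀ α : Fin 3, ((if d1 = α then 1 else 0) + (if d2 = α then 1 else 0)
      + (if d3 = α then 1 else 0) + (if d4 = α then 1 else 0)) % 2 = N % 2) :
    (d1 = d2 ∧ d3 = d4) ∨ (d1 ≠ d2 ∧ d3 ≠ d4 ∧ (d3 = d1 ∨ d3 = d2) ∧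
      (d4 = d1 ∨ d4 = d2)) := by
  rcases Nat.mod_two_eq_zero_or_one N with h | h <;>
    rw [h] at hp <;> revert hp <;> revert d1 d2 d3 d4 <;> decide

private lemma third_color (u v : Fin 3) : ∃ d : Fin 3, d ≠ u ∧ d ≠ v := by
  revert u v; decide
/-- The dot product of two non-3-edge-colorable cubic graphs is not
3-edge-colorable. The graph `G` on `V₁ ⊕ (V₂ \ {a₃, b₃})` is obtained by deleting
the independent edges `a₁b₁`, `a₂b₂` from `G₁`, deleting the adjacent vertices
`a₃, b₃` from `G₂` (with remaining neighbors `x₁,y₁` resp. `x₂,y₂`), and adding the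
edges `a₁x₁`, `b₁y₁`, `a₂x₂`, `b₂y₂`. -/
theorem stmt13 {V₁ V₂ : Type*} [Fintype V₁] [Fintype V₂]
    (G₁ : SimpleGraph V₁) (G₂ : SimpleGraph V₂)
    (h₁ : ∀ v, (G₁.neighborSet v).ncard = 3)
    (h₂ : ∀ v, (G₂.neighborSet v).ncard = 3)
    (a₁ b₁ a₂ b₂ : V₁) (a₃ b₃ x₁ y₁ x₂ y₂ : V₂)
    (he₁ : G₁.Adj a₁ b₁) (he₂ : G₁.Adj a₂ b₂)
    (hind : a₁ ≠ a₂ ∧ a₁ ≠ b₂ ∧ b₁ ≠ a₂ ∧ b₁ ≠ b₂)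
    (he₃ : G₂.Adj a₃ b₃)
    (hna : G₂.neighborSet a₃ = {b₃, x₁, y₁})
    (hnb : G₂.neighborSet b₃ = {a₃, x₂, y₂})
    (G : SimpleGraph (V₁ ⊕ {v : V₂ // v ≠ a₃ ∧ v ≠ b₃}))
    (hGll : ∀ u v : V₁, G.Adj (.inl u) (.inl v) ↔
      (G₁.Adj u v ∧ s(u, v) ≠ s(a₁, b₁) ∧ s(u, v) ≠ s(a₂, b₂)))
    (hGrr : ∀ u v : {v : V₂ // v ≠ a₃ ∧ v ≠ b₃},
      G.Adj (.inr u) (.inr v) ↔ G₂.Adj u.1 v.1)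
    (hGlr : ∀ (u : V₁) (v : {v : V₂ // v ≠ a₃ ∧ v ≠ b₃}),
      G.Adj (.inl u) (.inr v) ↔
        ((u = a₁ ∧ v.1 = x₁) ∨ (u = b₁ ∧ v.1 = y₁) ∨
         (u = a₂ ∧ v.1 = x₂) ∨ (u = b₂ ∧ v.1 = y₂)))
    (hc₁ : ¬ Is3EdgeColorable G₁) (hc₂ : ¬ Is3EdgeColorable G₂) :
    ¬ Is3EdgeColorable G := by
  classical
  rintro ⟨C, hC⟩
  obtain ⟨ha1a2, ha1b2, hb1a2, hb1b2⟩ := hind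
  have ha1b1 : a₁ ≠ b₁ := he₁.ne
  have ha2b2 : a₂ ≠ b₂ := he₂.ne
  have ha3b3 : a₃ ≠ b₃ := he₃.ne
  obtain ⟨hb3x1, hb3y1, hx1y1⟩ := triple_ne hna (h₂ a₃)
  obtain ⟨ha3x2, ha3y2, hx2y2⟩ := triple_ne hnb (h₂ b₃)
  have hx1adj : G₂.Adj a₃ x₁ := by
    have : x₁ ∈ G₂.neighborSet a₃ := by rw [hna]; simp
    exact this
  have hy1adj : G₂.Adj a₃ y₁ := by
    have : y₁ ∈ G₂.neighborSet a₃ := by rw [hna]; simp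
    exact this
  have hx2adj : G₂.Adj b₃ x₂ := by
    have : x₂ ∈ G₂.neighborSet b₃ := by rw [hnb]; simp
    exact this
  have hy2adj : G₂.Adj b₃ y₂ := by
    have : y₂ ∈ G₂.neighborSet b₃ := by rw [hnb]; simp
    exact this
  set X₁ : {v : V₂ // v ≠ a₃ ∧ v ≠ b₃} := ⟨x₁, hx1adj.ne', hb3x1.symm⟩ with hX₁
  set Y₁ : {v : V₂ // v ≠ a₃ ∧ v ≠ b₃} := ⟨y₁, hy1adj.ne', hb3y1.symm⟩ with hY₁
  set X₂ : {v : V₂ // v ≠ a₃ ∧ v ≠ b₃} := ⟨x₂, ha3x2.symm, hx2adj.ne'⟩ with hX₂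
  set Y₂ : {v : V₂ // v ≠ a₃ ∧ v ≠ b₃} := ⟨y₂, ha3y2.symm, hy2adj.ne'⟩ with hY₂
  have hE1 : G.Adj (.inl a₁) (.inr X₁) := (hGlr _ _).2 (Or.inl ⟨rfl, rfl⟩)
  have hE2 : G.Adj (.inl b₁) (.inr Y₁) := (hGlr _ _).2 (Or.inr (Or.inl ⟨rfl, rfl⟩))
  have hE3 : G.Adj (.inl a₂) (.inr X₂) := (hGlr _ _).2 (Or.inr (Or.inr (Or.inl ⟨rfl, rfl⟩)))
  have hE4 : G.Adj (.inl b₂) (.inr Y₂) := (hGlr _ _).2 (Or.inr (Or.inr (Or.inr ⟨rfl, rfl⟩)))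
  set c1 := C ⟨s(.inl a₁, .inr X₁), hE1⟩ with hc1
  set c2 := C ⟨s(.inl b₁, .inr Y₁), hE2⟩ with hc2
  set c3 := C ⟨s(.inl a₂, .inr X₂), hE3⟩ with hc3
  set c4 := C ⟨s(.inl b₂, .inr Y₂), hE4⟩ with hc4
  -- proper coloring helper
  have hC' : ∀ (u v w : V₁ ⊕ {v : V₂ // v ≠ a₃ ∧ v ≠ b₃}) (h1 : G.Adj u v) (h2 : G.Adj u w),
      v ≠ w → C ⟨s(u,v), h1⟩ ≠ C ⟨s(u,w), h2⟩ := by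
    intro u v w h1 h2 hvw
    refine hC _ _ ?_ ⟨u, by simp, by simp⟩
    intro h
    exact hvw (Sym2.congr_right.mp (Subtype.ext_iff.mp h))
  -- degree-3 property of left vertices of G
  have deg_special : ∀ (p q : V₁) (z : {v : V₂ // v ≠ a₃ ∧ v ≠ b₃}), G₁.Adj p q →
      (∀ u : V₁, G.Adj (.inl p) (.inl u) ↔ (G₁.Adj p u ∧ u ≠ q)) →
      (∀ w, G.Adj (.inl p) (.inr w) ↔ w = z) →
      (G.neighborSet (Sum.inl p)).ncard = 3 := by
    intro p q z hpq hll hlr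
    have hset : G.neighborSet (Sum.inl p) =
        Sum.inl '' (G₁.neighborSet p \ {q}) ∪ {Sum.inr z} := by
      ext w
      cases w with
      | inl u =>
        simp only [SimpleGraph.mem_neighborSet, hll u, Set.mem_union, Set.mem_image,
          Set.mem_diff, Set.mem_singleton_iff]
        constructor
        · rintro ⟨hu1, hu2⟩; exact Or.inl ⟨u, ⟨hu1, hu2⟩, rfl⟩
        · rintro (⟨x, ⟨hx1, hx2⟩, hx3⟩ | h)
          · obtain rfl := Sum.inl.inj hx3; exact ⟨hx1, hx2⟩
          · exact absurd h (by simp)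
      | inr u =>
        simp only [SimpleGraph.mem_neighborSet, hlr u, Set.mem_union, Set.mem_image,
          Set.mem_singleton_iff]
        constructor
        · intro h; exact Or.inr (by rw [h])
        · rintro (⟨x, _, hx3⟩ | h)
          · exact absurd hx3 (by simp)
          · exact Sum.inr.inj h ▸ rfl
    have hqmem : q ∈ G₁.neighborSet p := hpq
    rw [hset, Set.ncard_union_eq ?_ (Set.toFinite _) (Set.toFinite _)]
    · rw [Set.ncard_image_of_injOn (Function.Injective.injOn Sum.inl_injective),
        Set.ncard_diff_singleton_of_mem hqmem, h₁ p, Set.ncard_singleton]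
    · rw [Set.disjoint_singleton_right]
      rintro ⟨x, _, hx⟩; exact absurd hx (by simp)
  have deg_plain : ∀ p : V₁, p ≠ a₁ → p ≠ b₁ → p ≠ a₂ → p ≠ b₂ →
      (G.neighborSet (Sum.inl p)).ncard = 3 := by
    intro p h1 h2 h3 h4
    have hset : G.neighborSet (Sum.inl p) = Sum.inl '' G₁.neighborSet p := by
      ext w
      cases w with
      | inl u =>
        simp only [SimpleGraph.mem_neighborSet, hGll p u, Set.mem_image]
        constructor
        · rintro ⟨ha, _, _⟩; exact ⟨u, ha, rfl⟩
        · rintro ⟨x, hx1, hx2⟩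
          obtain rfl := Sum.inl.inj hx2
          refine ⟨hx1, ?_, ?_⟩
          · intro hq
            rcases Sym2.eq_iff.1 hq with ⟨hp, _⟩ | ⟨hp, _⟩
            · exact h1 hp
            · exact h2 hp
          · intro hq
            rcases Sym2.eq_iff.1 hq with ⟨hp, _⟩ | ⟨hp, _⟩
            · exact h3 hp
            · exact h4 hp
      | inr u =>
        simp only [SimpleGraph.mem_neighborSet, hGlr p u, Set.mem_image]
        constructor
        · rintro (⟨hp, _⟩ | ⟨hp, _⟩ | ⟨hp, _⟩ | ⟨hp, _⟩)
          · exact absurd hp h1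
          · exact absurd hp h2
          · exact absurd hp h3
          · exact absurd hp h4
        · rintro ⟨x, _, hx⟩; exact absurd hx (by simp)
    rw [hset, Set.ncard_image_of_injOn (Function.Injective.injOn Sum.inl_injective), h₁ p]
  have degL : ∀ v : V₁, (G.neighborSet (Sum.inl v)).ncard = 3 := by
    have inst1 : ∀ (p q r : V₁) (w : {v : V₂ // v ≠ a₃ ∧ v ≠ b₃}) (z : V₂),
        p ≠ r → (p = r ∧ (w : V₂) = z) → False := fun _ _ _ _ _ h hh => h hh.1
    intro v
    by_cases hv1 : v = a₁
    · subst hv1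
      refine deg_special v b₁ X₁ he₁ ?_ ?_
      · intro u
        rw [hGll]
        constructor
        · rintro ⟨h, h2, _⟩
          exact ⟨h, fun hu => h2 (by rw [hu])⟩
        · rintro ⟨h, h2⟩
          refine ⟨h, ?_, ?_⟩
          · intro hq
            rcases Sym2.eq_iff.1 hq with ⟨_, hu⟩ | ⟨hp, _⟩
            · exact h2 hu
            · exact ha1b1 hp
          · intro hq
            rcases Sym2.eq_iff.1 hq with ⟨hp, _⟩ | ⟨hp, _⟩
            · exact ha1a2 hp
            · exact ha1b2 hp
      · intro w
        rw [hGlr]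
        constructor
        · rintro (⟨_, h⟩ | ⟨h, _⟩ | ⟨h, _⟩ | ⟨h, _⟩)
          · exact Subtype.ext h
          · exact absurd h ha1b1
          · exact absurd h ha1a2
          · exact absurd h ha1b2
        · rintro rfl; exact Or.inl ⟨rfl, rfl⟩
    by_cases hv2 : v = b₁
    · subst hv2
      refine deg_special v a₁ Y₁ he₁.symm ?_ ?_
      · intro u
        rw [hGll]
        constructor
        · rintro ⟨h, h2, _⟩
          exact ⟨h, fun hu => h2 (by rw [hu, Sym2.eq_swap])⟩
        · rintro ⟨h, h2⟩
          refine ⟨h, ?_, ?_⟩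
          · intro hq
            rcases Sym2.eq_iff.1 hq with ⟨hp, _⟩ | ⟨_, hu⟩
            · exact ha1b1 hp.symm
            · exact h2 hu
          · intro hq
            rcases Sym2.eq_iff.1 hq with ⟨hp, _⟩ | ⟨hp, _⟩
            · exact hb1a2 hp
            · exact hb1b2 hp
      · intro w
        rw [hGlr]
        constructor
        · rintro (⟨h, _⟩ | ⟨_, h⟩ | ⟨h, _⟩ | ⟨h, _⟩)
          · exact absurd h.symm ha1b1
          · exact Subtype.ext h
          · exact absurd h hb1a2
          · exact absurd h hb1b2
        · rintro rfl; exact Or.inr (Or.inl ⟨rfl, rfl⟩)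
    by_cases hv3 : v = a₂
    · subst hv3
      refine deg_special v b₂ X₂ he₂ ?_ ?_
      · intro u
        rw [hGll]
        constructor
        · rintro ⟨h, _, h2⟩
          exact ⟨h, fun hu => h2 (by rw [hu])⟩
        · rintro ⟨h, h2⟩
          refine ⟨h, ?_, ?_⟩
          · intro hq
            rcases Sym2.eq_iff.1 hq with ⟨hp, _⟩ | ⟨hp, _⟩
            · exact ha1a2 hp.symm
            · exact hb1a2 hp.symm
          · intro hq
            rcases Sym2.eq_iff.1 hq with ⟨_, hu⟩ | ⟨hp, _⟩
            · exact h2 hu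
            · exact ha2b2 hp
      · intro w
        rw [hGlr]
        constructor
        · rintro (⟨h, _⟩ | ⟨h, _⟩ | ⟨_, h⟩ | ⟨h, _⟩)
          · exact absurd h.symm ha1a2
          · exact absurd h.symm hb1a2
          · exact Subtype.ext h
          · exact absurd h ha2b2
        · rintro rfl; exact Or.inr (Or.inr (Or.inl ⟨rfl, rfl⟩))
    by_cases hv4 : v = b₂
    · subst hv4
      refine deg_special v a₂ Y₂ he₂.symm ?_ ?_
      · intro u
        rw [hGll]
        constructor
        · rintro ⟨h, _, h2⟩
          exact ⟨h, fun hu => h2 (by rw [hu, Sym2.eq_swap])⟩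
        · rintro ⟨h, h2⟩
          refine ⟨h, ?_, ?_⟩
          · intro hq
            rcases Sym2.eq_iff.1 hq with ⟨hp, _⟩ | ⟨hp, _⟩
            · exact ha1b2 hp.symm
            · exact hb1b2 hp.symm
          · intro hq
            rcases Sym2.eq_iff.1 hq with ⟨hp, _⟩ | ⟨_, hu⟩
            · exact ha2b2 hp.symm
            · exact h2 hu
      · intro w
        rw [hGlr]
        constructor
        · rintro (⟨h, _⟩ | ⟨h, _⟩ | ⟨h, _⟩ | ⟨_, h⟩)
          · exact absurd h.symm ha1b2
          · exact absurd h.symm hb1b2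
          · exact absurd h.symm ha2b2
          · exact Subtype.ext h
        · rintro rfl; exact Or.inr (Or.inr (Or.inr ⟨rfl, rfl⟩))
    exact deg_plain v hv1 hv2 hv3 hv4
  -- rainbow: every color appears at every left vertex
  have rb : ∀ (v : V₁) (α : Fin 3), ∃ w, ∃ h : G.Adj (.inl v) w, C ⟨s(.inl v, w), h⟩ = α :=
    fun v α => rainbow G C hC _ (degL v) α
  have uniq : ∀ (v : V₁) (w w' : V₁ ⊕ {v : V₂ // v ≠ a₃ ∧ v ≠ b₃})
      (hw : G.Adj (.inl v) w) (hw' : G.Adj (.inl v) w'),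
      C ⟨s(.inl v, w), hw⟩ = C ⟨s(.inl v, w'), hw'⟩ → w = w' := by
    intro v w w' hw hw' h
    by_contra hne
    exact hC' _ _ _ hw hw' hne h
  -- parity of crossing edges of each color
  have parity : ∀ α : Fin 3,
      ((if c1 = α then 1 else 0) + (if c2 = α then 1 else 0) + (if c3 = α then 1 else 0)
        + (if c4 = α then 1 else 0)) % 2 = Fintype.card V₁ % 2 := by
    intro α
    choose nb hnb1 hnb2 using fun v => rb v α
    have key : ∀ (v : V₁) (w) (h : G.Adj (.inl v) w), C ⟨s(.inl v, w), h⟩ = α → w = nb v :=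
      fun v w h hcol => uniq v w (nb v) h (hnb1 v) (hcol.trans (hnb2 v).symm)
    have hsym : ∀ v u : V₁, nb v = .inl u → nb u = .inl v := by
      intro v u h
      have h1 : G.Adj (.inl v) (.inl u) := h ▸ hnb1 v
      have heq : (⟨s(.inl v, nb v), hnb1 v⟩ : G.edgeSet) = ⟨s(.inl v, .inl u), h1⟩ :=
        Subtype.ext (show s(Sum.inl v, nb v) = s(Sum.inl v, Sum.inl u) by rw [h])
      have h2 : C ⟨s(.inl v, .inl u), h1⟩ = α := (congrArg C heq).symm.trans (hnb2 v)
      have h4 : C ⟨s(.inl u, .inl v), h1.symm⟩ = α := by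
        rw [← h2]; exact congrArg C (Subtype.ext (Sym2.eq_swap))
      exact (key u (.inl v) h1.symm h4).symm
    set S : Finset V₁ := Finset.univ.filter (fun v => ∃ u, nb v = Sum.inl u) with hS
    have hmem : ∀ v : V₁, v ∈ S ↔ ∃ u, nb v = Sum.inl u := by
      intro v; rw [hS, Finset.mem_filter]; simp
    have hSeven : 2 ∣ S.card := by
      have hsum : ∑ _v ∈ S, (1 : ZMod 2) = 0 := by
        refine Finset.sum_involution
          (fun v hv => Classical.choose ((hmem v).1 hv)) (fun a ha => by decide)
          (fun a ha _ => ?_) (fun a ha => ?_) (fun a ha => ?_)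
        · intro heq
          have hu := Classical.choose_spec ((hmem a).1 ha)
          have h2 : nb a = Sum.inl a := hu.trans (congrArg Sum.inl heq)
          have h3 := hnb1 a
          rw [h2] at h3
          exact G.irrefl h3
        · exact (hmem _).2 ⟨a, hsym _ _ (Classical.choose_spec ((hmem a).1 ha))⟩
        · have gfix : ∀ (b : V₁) (hb : ∃ u, nb b = Sum.inl u), nb b = Sum.inl a →
              Classical.choose hb = a := fun b hb h =>
            Sum.inl_injective ((Classical.choose_spec hb).symm.trans h)
          exact gfix _ _ (hsym _ _ (Classical.choose_spec ((hmem a).1 ha)))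
      have h5 : ((S.card : ℕ) : ZMod 2) = 0 := by simpa using hsum
      exact (ZMod.natCast_eq_zero_iff _ 2).1 h5
    -- characterize the complement
    have hcomp : ∀ v : V₁, v ∈ Sᶜ ↔ ∃ u, nb v = Sum.inr u := by
      intro v
      rw [Finset.mem_compl, hmem]
      cases h : nb v with
      | inl u => simp [h]
      | inr u => simp [h]
    have hmema : a₁ ∈ Sᶜ ↔ c1 = α := by
      rw [hcomp]
      constructor
      · rintro ⟨w, hw⟩
        have hadj : G.Adj (.inl a₁) (.inr w) := hw ▸ hnb1 a₁
        have hwX : w = X₁ := by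
          rcases (hGlr _ _).1 hadj with ⟨_, h⟩ | ⟨h, _⟩ | ⟨h, _⟩ | ⟨h, _⟩
          · exact Subtype.ext h
          · exact absurd h ha1b1
          · exact absurd h ha1a2
          · exact absurd h ha1b2
        subst hwX
        have heqe : (⟨s(.inl a₁, nb a₁), hnb1 a₁⟩ : G.edgeSet)
            = ⟨s(.inl a₁, .inr X₁), hE1⟩ := Subtype.ext
          (show s(Sum.inl a₁, nb a₁) = s(Sum.inl a₁, Sum.inr X₁) by rw [hw])
        exact (congrArg C heqe).symm.trans (hnb2 a₁)
      · intro h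
        refine ⟨X₁, (key a₁ _ hE1 h).symm⟩
    have hmemb : b₁ ∈ Sᶜ ↔ c2 = α := by
      rw [hcomp]
      constructor
      · rintro ⟨w, hw⟩
        have hadj : G.Adj (.inl b₁) (.inr w) := hw ▸ hnb1 b₁
        have hwX : w = Y₁ := by
          rcases (hGlr _ _).1 hadj with ⟨h, _⟩ | ⟨_, h⟩ | ⟨h, _⟩ | ⟨h, _⟩
          · exact absurd h.symm ha1b1
          · exact Subtype.ext h
          · exact absurd h hb1a2
          · exact absurd h hb1b2
        subst hwX
        have heqe : (⟨s(.inl b₁, nb b₁), hnb1 b₁⟩ : G.edgeSet)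
            = ⟨s(.inl b₁, .inr Y₁), hE2⟩ := Subtype.ext
          (show s(Sum.inl b₁, nb b₁) = s(Sum.inl b₁, Sum.inr Y₁) by rw [hw])
        exact (congrArg C heqe).symm.trans (hnb2 b₁)
      · intro h
        refine ⟨Y₁, (key b₁ _ hE2 h).symm⟩
    have hmemc : a₂ ∈ Sᶜ ↔ c3 = α := by
      rw [hcomp]
      constructor
      · rintro ⟨w, hw⟩
        have hadj : G.Adj (.inl a₂) (.inr w) := hw ▸ hnb1 a₂
        have hwX : w = X₂ := by
          rcases (hGlr _ _).1 hadj with ⟨h, _⟩ | ⟨h, _⟩ | ⟨_, h⟩ | ⟨h, _⟩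
          · exact absurd h.symm ha1a2
          · exact absurd h.symm hb1a2
          · exact Subtype.ext h
          · exact absurd h ha2b2
        subst hwX
        have heqe : (⟨s(.inl a₂, nb a₂), hnb1 a₂⟩ : G.edgeSet)
            = ⟨s(.inl a₂, .inr X₂), hE3⟩ := Subtype.ext
          (show s(Sum.inl a₂, nb a₂) = s(Sum.inl a₂, Sum.inr X₂) by rw [hw])
        exact (congrArg C heqe).symm.trans (hnb2 a₂)
      · intro h
        refine ⟨X₂, (key a₂ _ hE3 h).symm⟩
    have hmemd : b₂ ∈ Sᶜ ↔ c4 = α := by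
      rw [hcomp]
      constructor
      · rintro ⟨w, hw⟩
        have hadj : G.Adj (.inl b₂) (.inr w) := hw ▸ hnb1 b₂
        have hwX : w = Y₂ := by
          rcases (hGlr _ _).1 hadj with ⟨h, _⟩ | ⟨h, _⟩ | ⟨h, _⟩ | ⟨_, h⟩
          · exact absurd h.symm ha1b2
          · exact absurd h.symm hb1b2
          · exact absurd h.symm ha2b2
          · exact Subtype.ext h
        subst hwX
        have heqe : (⟨s(.inl b₂, nb b₂), hnb1 b₂⟩ : G.edgeSet)
            = ⟨s(.inl b₂, .inr Y₂), hE4⟩ := Subtype.ext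
          (show s(Sum.inl b₂, nb b₂) = s(Sum.inl b₂, Sum.inr Y₂) by rw [hw])
        exact (congrArg C heqe).symm.trans (hnb2 b₂)
      · intro h
        refine ⟨Y₂, (key b₂ _ hE4 h).symm⟩
    have hsub : Sᶜ = Finset.filter (fun v => v ∈ Sᶜ) {a₁, b₁, a₂, b₂} := by
      ext v
      rw [Finset.mem_filter]
      constructor
      · intro hv
        refine ⟨?_, hv⟩
        obtain ⟨w, hw⟩ := (hcomp v).1 hv
        have hadj : G.Adj (.inl v) (.inr w) := hw ▸ hnb1 v
        rcases (hGlr _ _).1 hadj with ⟨h, _⟩ | ⟨h, _⟩ | ⟨h, _⟩ | ⟨h, _⟩ <;>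
          · subst h; simp [Finset.mem_insert]
      · exact fun h => h.2
    have hcount : Sᶜ.card = (if c1 = α then 1 else 0) + (if c2 = α then 1 else 0)
        + (if c3 = α then 1 else 0) + (if c4 = α then 1 else 0) := by
      rw [hsub, Finset.card_filter]
      have e1 : ({a₁, b₁, a₂, b₂} : Finset V₁) = insert a₁ (insert b₁ (insert a₂ {b₂})) := rfl
      rw [e1, Finset.sum_insert (by simp [ha1b1, ha1a2, ha1b2]),
        Finset.sum_insert (by simp [hb1a2, hb1b2]),
        Finset.sum_insert (by simp [ha2b2]), Finset.sum_singleton]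
      simp only [hmema, hmemb, hmemc, hmemd]
      ring
    have htot : S.card + Sᶜ.card = Fintype.card V₁ := Finset.card_add_card_compl S
    omega
  -- the dichotomy of colors of the four crossing edges
  have key4 : (c1 = c2 ∧ c3 = c4) ∨ (c1 ≠ c2 ∧ c3 ≠ c4 ∧ (c3 = c1 ∨ c3 = c2) ∧
      (c4 = c1 ∨ c4 = c2)) := by
    exact count_dichotomy (Fintype.card V₁) c1 c2 c3 c4 parity
  rcases key4 with ⟨h12, h34⟩ | ⟨h12, h34, hc3m, hc4m⟩
  -- Case A : both pairs of crossing edges are monochromatic; color G₁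
  · apply hc₁
    have hd21 : s(a₂, b₂) ≠ s(a₁, b₁) := by
      intro h
      rcases Sym2.eq_iff.1 h with ⟨h', _⟩ | ⟨h', _⟩
      · exact ha1a2 h'.symm
      · exact hb1a2 h'.symm
    set f : Sym2 V₁ → Fin 3 := fun e =>
      if e = s(a₁, b₁) then c1 else if e = s(a₂, b₂) then c3
      else if h : Sym2.map Sum.inl e ∈ G.edgeSet then C ⟨_, h⟩ else 0 with hf
    have hfd1 : f s(a₁, b₁) = c1 := by simp [hf]
    have hfd2 : f s(a₂, b₂) = c3 := by rw [hf]; beta_reduce; rw [if_neg hd21]; simp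
    have ford : ∀ (v w : V₁) (h : G₁.Adj v w), s(v, w) ≠ s(a₁, b₁) → s(v, w) ≠ s(a₂, b₂) →
        ∃ hm : G.Adj (Sum.inl v) (Sum.inl w), f s(v, w) = C ⟨s(Sum.inl v, Sum.inl w), hm⟩ := by
      intro v w h h1 h2
      have hm : G.Adj (.inl v) (.inl w) := (hGll v w).2 ⟨h, h1, h2⟩
      refine ⟨hm, ?_⟩
      simp only [hf, if_neg h1, if_neg h2, Sym2.map_pair_eq]
      rw [dif_pos (G.mem_edgeSet.mpr hm)]
    have hone : ∀ (v w₁ w₂ : V₁), G₁.Adj v w₂ → s(v, w₁) = s(a₁, b₁) →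
        s(v, w₂) ≠ s(a₁, b₁) → s(v, w₂) ≠ s(a₂, b₂) → f s(v, w₁) ≠ f s(v, w₂) := by
      intro v w₁ w₂ h2 e1 n1 n2
      obtain ⟨hm, hval⟩ := ford v w₂ h2 n1 n2
      rw [show f s(v, w₁) = c1 from by rw [e1]; exact hfd1, hval]
      rcases Sym2.eq_iff.1 e1 with ⟨rfl, rfl⟩ | ⟨rfl, rfl⟩
      · exact hC' (Sum.inl v) (Sum.inr X₁) (Sum.inl w₂) hE1 hm (by simp)
      · rw [h12]
        exact hC' (Sum.inl v) (Sum.inr Y₁) (Sum.inl w₂) hE2 hm (by simp)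
    have htwo : ∀ (v w₁ w₂ : V₁), G₁.Adj v w₂ → s(v, w₁) = s(a₂, b₂) →
        s(v, w₂) ≠ s(a₁, b₁) → s(v, w₂) ≠ s(a₂, b₂) → f s(v, w₁) ≠ f s(v, w₂) := by
      intro v w₁ w₂ h2 e1 n1 n2
      obtain ⟨hm, hval⟩ := ford v w₂ h2 n1 n2
      rw [show f s(v, w₁) = c3 from by rw [e1]; exact hfd2, hval]
      rcases Sym2.eq_iff.1 e1 with ⟨rfl, rfl⟩ | ⟨rfl, rfl⟩
      · exact hC' (Sum.inl v) (Sum.inr X₂) (Sum.inl w₂) hE3 hm (by simp)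
      · rw [h34]
        exact hC' (Sum.inl v) (Sum.inr Y₂) (Sum.inl w₂) hE4 hm (by simp)
    have main : ∀ (v w₁ w₂ : V₁), G₁.Adj v w₁ → G₁.Adj v w₂ → w₁ ≠ w₂ →
        f s(v, w₁) ≠ f s(v, w₂) := by
      intro v w₁ w₂ h1 h2 hne
      have hneq : s(v, w₁) ≠ s(v, w₂) := fun h => hne (Sym2.congr_right.1 h)
      by_cases e1a : s(v, w₁) = s(a₁, b₁)
      · by_cases e2a : s(v, w₂) = s(a₁, b₁)
        · exact absurd (e1a.trans e2a.symm) hneq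
        by_cases e2b : s(v, w₂) = s(a₂, b₂)
        · exfalso
          rcases Sym2.eq_iff.1 e1a with ⟨h', _⟩ | ⟨h', _⟩ <;>
            rcases Sym2.eq_iff.1 e2b with ⟨h'', _⟩ | ⟨h'', _⟩
          · exact ha1a2 (h'.symm.trans h'')
          · exact ha1b2 (h'.symm.trans h'')
          · exact hb1a2 (h'.symm.trans h'')
          · exact hb1b2 (h'.symm.trans h'')
        · exact hone v w₁ w₂ h2 e1a e2a e2b
      · by_cases e1b : s(v, w₁) = s(a₂, b₂)
        · by_cases e2a : s(v, w₂) = s(a₁, b₁)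
          · exfalso
            rcases Sym2.eq_iff.1 e1b with ⟨h', _⟩ | ⟨h', _⟩ <;>
              rcases Sym2.eq_iff.1 e2a with ⟨h'', _⟩ | ⟨h'', _⟩
            · exact ha1a2 (h''.symm.trans h')
            · exact hb1a2 (h''.symm.trans h')
            · exact ha1b2 (h''.symm.trans h')
            · exact hb1b2 (h''.symm.trans h')
          by_cases e2b : s(v, w₂) = s(a₂, b₂)
          · exact absurd (e1b.trans e2b.symm) hneq
          · exact htwo v w₁ w₂ h2 e1b e2a e2b
        · by_cases e2a : s(v, w₂) = s(a₁, b₁)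
          · exact (hone v w₂ w₁ h1 e2a e1a e1b).symm
          by_cases e2b : s(v, w₂) = s(a₂, b₂)
          · exact (htwo v w₂ w₁ h1 e2b e1a e1b).symm
          · obtain ⟨hm1, hv1'⟩ := ford v w₁ h1 e1a e1b
            obtain ⟨hm2, hv2'⟩ := ford v w₂ h2 e2a e2b
            rw [hv1', hv2']
            exact hC' _ _ _ hm1 hm2 (fun h => hne (Sum.inl.inj h))
    refine ⟨fun e => f e.1, ?_⟩
    rintro e₁ e₂ hne ⟨v, hv1, hv2⟩
    obtain ⟨w₁, hw₁⟩ := Sym2.mem_iff_exists.1 hv1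
    obtain ⟨w₂, hw₂⟩ := Sym2.mem_iff_exists.1 hv2
    have hadj₁ : G₁.Adj v w₁ := by
      have h := e₁.2; rw [hw₁] at h; exact h
    have hadj₂ : G₁.Adj v w₂ := by
      have h := e₂.2; rw [hw₂] at h; exact h
    have hww : w₁ ≠ w₂ := by
      intro h; exact hne (Subtype.ext (by rw [hw₁, hw₂, h]))
    show f (e₁ : Sym2 V₁) ≠ f (e₂ : Sym2 V₁)
    rw [hw₁, hw₂]
    exact main v w₁ w₂ hadj₁ hadj₂ hww
  -- Case B : crossing pairs bichromatic with equal color sets; color G₂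
  · apply hc₂
    obtain ⟨c0, hc01, hc02⟩ := third_color c1 c2
    have hc03 : c0 ≠ c3 := by rcases hc3m with h | h <;> rw [h] <;> assumption
    have hc04 : c0 ≠ c4 := by rcases hc4m with h | h <;> rw [h] <;> assumption
    -- pairwise distinctness of the five special edges
    have n10 : s(a₃, x₁) ≠ s(a₃, b₃) := by
      intro h
      rcases Sym2.eq_iff.1 h with ⟨_, h2'⟩ | ⟨h1', _⟩
      · exact hb3x1 h2'.symm
      · exact ha3b3 h1'
    have n20 : s(a₃, y₁) ≠ s(a₃, b₃) := by
      intro h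
      rcases Sym2.eq_iff.1 h with ⟨_, h2'⟩ | ⟨h1', _⟩
      · exact hb3y1 h2'.symm
      · exact ha3b3 h1'
    have n21 : s(a₃, y₁) ≠ s(a₃, x₁) := by
      intro h
      rcases Sym2.eq_iff.1 h with ⟨_, h2'⟩ | ⟨h1', _⟩
      · exact hx1y1 h2'.symm
      · exact hx1adj.ne h1'
    have n30 : s(b₃, x₂) ≠ s(a₃, b₃) := by
      intro h
      rcases Sym2.eq_iff.1 h with ⟨h1', _⟩ | ⟨_, h2'⟩
      · exact ha3b3 h1'.symm
      · exact ha3x2 h2'.symm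
    have n31 : s(b₃, x₂) ≠ s(a₃, x₁) := by
      intro h
      rcases Sym2.eq_iff.1 h with ⟨h1', _⟩ | ⟨h1', _⟩
      · exact ha3b3 h1'.symm
      · exact hb3x1 h1'
    have n32 : s(b₃, x₂) ≠ s(a₃, y₁) := by
      intro h
      rcases Sym2.eq_iff.1 h with ⟨h1', _⟩ | ⟨h1', _⟩
      · exact ha3b3 h1'.symm
      · exact hb3y1 h1'
    have n40 : s(b₃, y₂) ≠ s(a₃, b₃) := by
      intro h
      rcases Sym2.eq_iff.1 h with ⟨h1', _⟩ | ⟨_, h2'⟩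
      · exact ha3b3 h1'.symm
      · exact ha3y2 h2'.symm
    have n41 : s(b₃, y₂) ≠ s(a₃, x₁) := by
      intro h
      rcases Sym2.eq_iff.1 h with ⟨h1', _⟩ | ⟨h1', _⟩
      · exact ha3b3 h1'.symm
      · exact hb3x1 h1'
    have n42 : s(b₃, y₂) ≠ s(a₃, y₁) := by
      intro h
      rcases Sym2.eq_iff.1 h with ⟨h1', _⟩ | ⟨h1', _⟩
      · exact ha3b3 h1'.symm
      · exact hb3y1 h1'
    have n43 : s(b₃, y₂) ≠ s(b₃, x₂) := by
      intro h
      rcases Sym2.eq_iff.1 h with ⟨_, h2'⟩ | ⟨h1', _⟩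
      · exact hx2y2 h2'.symm
      · exact hx2adj.ne h1'
    set emb : V₂ → V₁ ⊕ {v : V₂ // v ≠ a₃ ∧ v ≠ b₃} := fun w =>
      if h : w ≠ a₃ ∧ w ≠ b₃ then Sum.inr ⟨w, h⟩ else Sum.inr X₁ with hemb
    set g : Sym2 V₂ → Fin 3 := fun e =>
      if e = s(a₃, b₃) then c0 else if e = s(a₃, x₁) then c1 else if e = s(a₃, y₁) then c2
      else if e = s(b₃, x₂) then c3 else if e = s(b₃, y₂) then c4
      else if h : Sym2.map emb e ∈ G.edgeSet then C ⟨_, h⟩ else 0 with hg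
    have gv0 : g s(a₃, b₃) = c0 := by simp [hg]
    have gv1 : g s(a₃, x₁) = c1 := by rw [hg]; beta_reduce; rw [if_neg n10]; simp
    have gv2 : g s(a₃, y₁) = c2 := by rw [hg]; beta_reduce; rw [if_neg n20, if_neg n21]; simp
    have gv3 : g s(b₃, x₂) = c3 := by
      rw [hg]; beta_reduce; rw [if_neg n30, if_neg n31, if_neg n32]; simp
    have gv4 : g s(b₃, y₂) = c4 := by
      rw [hg]; beta_reduce; rw [if_neg n40, if_neg n41, if_neg n42, if_neg n43]; simp
    have hval0 : ∀ v w : V₂, s(v, w) = s(a₃, b₃) → g s(v, w) = c0 := fun v w e => by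
      rw [e]; exact gv0
    have hval1 : ∀ v w : V₂, s(v, w) = s(a₃, x₁) → g s(v, w) = c1 := fun v w e => by
      rw [e]; exact gv1
    have hval2 : ∀ v w : V₂, s(v, w) = s(a₃, y₁) → g s(v, w) = c2 := fun v w e => by
      rw [e]; exact gv2
    have hval3 : ∀ v w : V₂, s(v, w) = s(b₃, x₂) → g s(v, w) = c3 := fun v w e => by
      rw [e]; exact gv3
    have hval4 : ∀ v w : V₂, s(v, w) = s(b₃, y₂) → g s(v, w) = c4 := fun v w e => by
      rw [e]; exact gv4
    have swapne : ∀ (v w : V₂) (z : Sym2 V₂), s(v, w) ≠ z → s(w, v) ≠ z :=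
      fun v w z h hh => h (Sym2.eq_swap.trans hh)
    have gside : ∀ v w : V₂, G₂.Adj v w → s(v, w) ≠ s(a₃, b₃) → s(v, w) ≠ s(a₃, x₁) →
        s(v, w) ≠ s(a₃, y₁) → s(v, w) ≠ s(b₃, x₂) → s(v, w) ≠ s(b₃, y₂) →
        v ≠ a₃ ∧ v ≠ b₃ := by
      intro v w h n0 n1 n2 n3 n4
      constructor
      · intro hva
        have hmem2 : w ∈ G₂.neighborSet a₃ := by rw [← hva]; exact h
        rw [hna] at hmem2
        simp only [Set.mem_insert_iff, Set.mem_singleton_iff] at hmem2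
        rcases hmem2 with h' | h' | h'
        · exact n0 (by rw [hva, h'])
        · exact n1 (by rw [hva, h'])
        · exact n2 (by rw [hva, h'])
      · intro hvb
        have hmem2 : w ∈ G₂.neighborSet b₃ := by rw [← hvb]; exact h
        rw [hnb] at hmem2
        simp only [Set.mem_insert_iff, Set.mem_singleton_iff] at hmem2
        rcases hmem2 with h' | h' | h'
        · exact n0 (by rw [hvb, h']; exact Sym2.eq_swap)
        · exact n3 (by rw [hvb, h'])
        · exact n4 (by rw [hvb, h'])
    have gord : ∀ v w : V₂, G₂.Adj v w → s(v, w) ≠ s(a₃, b₃) → s(v, w) ≠ s(a₃, x₁) →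
        s(v, w) ≠ s(a₃, y₁) → s(v, w) ≠ s(b₃, x₂) → s(v, w) ≠ s(b₃, y₂) →
        ∃ (hv : v ≠ a₃ ∧ v ≠ b₃) (hw : w ≠ a₃ ∧ w ≠ b₃)
          (hm : G.Adj (Sum.inr ⟨v, hv⟩) (Sum.inr ⟨w, hw⟩)),
          g s(v, w) = C ⟨s(Sum.inr ⟨v, hv⟩, Sum.inr ⟨w, hw⟩), hm⟩ := by
      intro v w h n0 n1 n2 n3 n4
      have hv := gside v w h n0 n1 n2 n3 n4
      have hw := gside w v h.symm (swapne _ _ _ n0) (swapne _ _ _ n1) (swapne _ _ _ n2)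
        (swapne _ _ _ n3) (swapne _ _ _ n4)
      have hm : G.Adj (Sum.inr ⟨v, hv⟩) (Sum.inr ⟨w, hw⟩) := (hGrr _ _).2 h
      refine ⟨hv, hw, hm, ?_⟩
      simp only [hg, hemb, if_neg n0, if_neg n1, if_neg n2, if_neg n3, if_neg n4,
        Sym2.map_pair_eq]
      simp only [eq_true hv, eq_true hw, dite_true]
      rw [dif_pos (G.mem_edgeSet.mpr hm)]
    -- conditional inequalities between crossing colors sharing a vertex in V₂
    have h13 : ∀ v w₁ w₂ : V₂, s(v, w₁) = s(a₃, x₁) → s(v, w₂) = s(b₃, x₂) → c1 ≠ c3 := by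
      intro v w₁ w₂ e1 e2
      rcases Sym2.eq_iff.1 e1 with ⟨h1', _⟩ | ⟨h1', _⟩
      · exfalso
        rcases Sym2.eq_iff.1 e2 with ⟨h2', _⟩ | ⟨h2', _⟩
        · exact ha3b3 (h1'.symm.trans h2')
        · exact ha3x2 (h1'.symm.trans h2')
      · rcases Sym2.eq_iff.1 e2 with ⟨h2', _⟩ | ⟨h2', _⟩
        · exact absurd (h1'.symm.trans h2') (fun hh => hb3x1 hh.symm)
        · have hXX : X₁ = X₂ := Subtype.ext (h1'.symm.trans h2')
          have hE3' : G.Adj (Sum.inr X₁) (Sum.inl a₂) := by rw [hXX]; exact hE3.symm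
          have hne' := hC' (Sum.inr X₁) (Sum.inl a₁) (Sum.inl a₂) hE1.symm hE3'
            (by simp [ha1a2])
          rw [show c1 = C ⟨s(Sum.inr X₁, Sum.inl a₁), hE1.symm⟩ from
            congrArg C (Subtype.ext Sym2.eq_swap),
            show c3 = C ⟨s(Sum.inr X₁, Sum.inl a₂), hE3'⟩ from
            congrArg C (Subtype.ext (show s(Sum.inl a₂, Sum.inr X₂) = s(Sum.inr X₁, Sum.inl a₂)
              by rw [hXX]; exact Sym2.eq_swap))]
          exact hne'
    have h14 : ∀ v w₁ w₂ : V₂, s(v, w₁) = s(a₃, x₁) → s(v, w₂) = s(b₃, y₂) → c1 ≠ c4 := by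
      intro v w₁ w₂ e1 e2
      rcases Sym2.eq_iff.1 e1 with ⟨h1', _⟩ | ⟨h1', _⟩
      · exfalso
        rcases Sym2.eq_iff.1 e2 with ⟨h2', _⟩ | ⟨h2', _⟩
        · exact ha3b3 (h1'.symm.trans h2')
        · exact ha3y2 (h1'.symm.trans h2')
      · rcases Sym2.eq_iff.1 e2 with ⟨h2', _⟩ | ⟨h2', _⟩
        · exact absurd (h1'.symm.trans h2') (fun hh => hb3x1 hh.symm)
        · have hXX : X₁ = Y₂ := Subtype.ext (h1'.symm.trans h2')
          have hE4' : G.Adj (Sum.inr X₁) (Sum.inl b₂) := by rw [hXX]; exact hE4.symm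
          have hne' := hC' (Sum.inr X₁) (Sum.inl a₁) (Sum.inl b₂) hE1.symm hE4'
            (by simp [ha1b2])
          rw [show c1 = C ⟨s(Sum.inr X₁, Sum.inl a₁), hE1.symm⟩ from
            congrArg C (Subtype.ext Sym2.eq_swap),
            show c4 = C ⟨s(Sum.inr X₁, Sum.inl b₂), hE4'⟩ from
            congrArg C (Subtype.ext (show s(Sum.inl b₂, Sum.inr Y₂) = s(Sum.inr X₁, Sum.inl b₂)
              by rw [hXX]; exact Sym2.eq_swap))]
          exact hne'
    have h23 : ∀ v w₁ w₂ : V₂, s(v, w₁) = s(a₃, y₁) → s(v, w₂) = s(b₃, x₂) → c2 ≠ c3 := by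
      intro v w₁ w₂ e1 e2
      rcases Sym2.eq_iff.1 e1 with ⟨h1', _⟩ | ⟨h1', _⟩
      · exfalso
        rcases Sym2.eq_iff.1 e2 with ⟨h2', _⟩ | ⟨h2', _⟩
        · exact ha3b3 (h1'.symm.trans h2')
        · exact ha3x2 (h1'.symm.trans h2')
      · rcases Sym2.eq_iff.1 e2 with ⟨h2', _⟩ | ⟨h2', _⟩
        · exact absurd (h1'.symm.trans h2') (fun hh => hb3y1 hh.symm)
        · have hXX : Y₁ = X₂ := Subtype.ext (h1'.symm.trans h2')
          have hE3' : G.Adj (Sum.inr Y₁) (Sum.inl a₂) := by rw [hXX]; exact hE3.symm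
          have hne' := hC' (Sum.inr Y₁) (Sum.inl b₁) (Sum.inl a₂) hE2.symm hE3'
            (by simp [hb1a2])
          rw [show c2 = C ⟨s(Sum.inr Y₁, Sum.inl b₁), hE2.symm⟩ from
            congrArg C (Subtype.ext Sym2.eq_swap),
            show c3 = C ⟨s(Sum.inr Y₁, Sum.inl a₂), hE3'⟩ from
            congrArg C (Subtype.ext (show s(Sum.inl a₂, Sum.inr X₂) = s(Sum.inr Y₁, Sum.inl a₂)
              by rw [hXX]; exact Sym2.eq_swap))]
          exact hne'
    have h24 : ∀ v w₁ w₂ : V₂, s(v, w₁) = s(a₃, y₁) → s(v, w₂) = s(b₃, y₂) → c2 ≠ c4 := by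
      intro v w₁ w₂ e1 e2
      rcases Sym2.eq_iff.1 e1 with ⟨h1', _⟩ | ⟨h1', _⟩
      · exfalso
        rcases Sym2.eq_iff.1 e2 with ⟨h2', _⟩ | ⟨h2', _⟩
        · exact ha3b3 (h1'.symm.trans h2')
        · exact ha3y2 (h1'.symm.trans h2')
      · rcases Sym2.eq_iff.1 e2 with ⟨h2', _⟩ | ⟨h2', _⟩
        · exact absurd (h1'.symm.trans h2') (fun hh => hb3y1 hh.symm)
        · have hXX : Y₁ = Y₂ := Subtype.ext (h1'.symm.trans h2')
          have hE4' : G.Adj (Sum.inr Y₁) (Sum.inl b₂) := by rw [hXX]; exact hE4.symm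
          have hne' := hC' (Sum.inr Y₁) (Sum.inl b₁) (Sum.inl b₂) hE2.symm hE4'
            (by simp [hb1b2])
          rw [show c2 = C ⟨s(Sum.inr Y₁, Sum.inl b₁), hE2.symm⟩ from
            congrArg C (Subtype.ext Sym2.eq_swap),
            show c4 = C ⟨s(Sum.inr Y₁, Sum.inl b₂), hE4'⟩ from
            congrArg C (Subtype.ext (show s(Sum.inl b₂, Sum.inr Y₂) = s(Sum.inr Y₁, Sum.inl b₂)
              by rw [hXX]; exact Sym2.eq_swap))]
          exact hne'
    -- special edge versus ordinary edge
    have ho0 : ∀ v w₁ w₂ : V₂, G₂.Adj v w₂ → s(v, w₁) = s(a₃, b₃) →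
        s(v, w₂) ≠ s(a₃, b₃) → s(v, w₂) ≠ s(a₃, x₁) → s(v, w₂) ≠ s(a₃, y₁) →
        s(v, w₂) ≠ s(b₃, x₂) → s(v, w₂) ≠ s(b₃, y₂) → False := by
      intro v w₁ w₂ h2 e1 n0 n1 n2 n3 n4
      have hv := gside v w₂ h2 n0 n1 n2 n3 n4
      rcases Sym2.eq_iff.1 e1 with ⟨h', _⟩ | ⟨h', _⟩
      · exact hv.1 h'
      · exact hv.2 h'
    have ho1 : ∀ v w₁ w₂ : V₂, G₂.Adj v w₂ → s(v, w₁) = s(a₃, x₁) →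
        s(v, w₂) ≠ s(a₃, b₃) → s(v, w₂) ≠ s(a₃, x₁) → s(v, w₂) ≠ s(a₃, y₁) →
        s(v, w₂) ≠ s(b₃, x₂) → s(v, w₂) ≠ s(b₃, y₂) → g s(v, w₁) ≠ g s(v, w₂) := by
      intro v w₁ w₂ h2 e1 n0 n1 n2 n3 n4
      obtain ⟨hv, hw, hm, hval⟩ := gord v w₂ h2 n0 n1 n2 n3 n4
      rw [hval1 v w₁ e1, hval]
      rcases Sym2.eq_iff.1 e1 with ⟨h', _⟩ | ⟨h', _⟩
      · exact absurd h' hv.1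
      · subst h'
        rw [show c1 = C ⟨s(Sum.inr X₁, Sum.inl a₁), hE1.symm⟩ from
          congrArg C (Subtype.ext Sym2.eq_swap)]
        exact hC' (Sum.inr X₁) (Sum.inl a₁) (Sum.inr ⟨w₂, hw⟩) hE1.symm hm (by simp)
    have ho2 : ∀ v w₁ w₂ : V₂, G₂.Adj v w₂ → s(v, w₁) = s(a₃, y₁) →
        s(v, w₂) ≠ s(a₃, b₃) → s(v, w₂) ≠ s(a₃, x₁) → s(v, w₂) ≠ s(a₃, y₁) →
        s(v, w₂) ≠ s(b₃, x₂) → s(v, w₂) ≠ s(b₃, y₂) → g s(v, w₁) ≠ g s(v, w₂) := by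
      intro v w₁ w₂ h2 e1 n0 n1 n2 n3 n4
      obtain ⟨hv, hw, hm, hval⟩ := gord v w₂ h2 n0 n1 n2 n3 n4
      rw [hval2 v w₁ e1, hval]
      rcases Sym2.eq_iff.1 e1 with ⟨h', _⟩ | ⟨h', _⟩
      · exact absurd h' hv.1
      · subst h'
        rw [show c2 = C ⟨s(Sum.inr Y₁, Sum.inl b₁), hE2.symm⟩ from
          congrArg C (Subtype.ext Sym2.eq_swap)]
        exact hC' (Sum.inr Y₁) (Sum.inl b₁) (Sum.inr ⟨w₂, hw⟩) hE2.symm hm (by simp)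
    have ho3 : ∀ v w₁ w₂ : V₂, G₂.Adj v w₂ → s(v, w₁) = s(b₃, x₂) →
        s(v, w₂) ≠ s(a₃, b₃) → s(v, w₂) ≠ s(a₃, x₁) → s(v, w₂) ≠ s(a₃, y₁) →
        s(v, w₂) ≠ s(b₃, x₂) → s(v, w₂) ≠ s(b₃, y₂) → g s(v, w₁) ≠ g s(v, w₂) := by
      intro v w₁ w₂ h2 e1 n0 n1 n2 n3 n4
      obtain ⟨hv, hw, hm, hval⟩ := gord v w₂ h2 n0 n1 n2 n3 n4
      rw [hval3 v w₁ e1, hval]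
      rcases Sym2.eq_iff.1 e1 with ⟨h', _⟩ | ⟨h', _⟩
      · exact absurd h' hv.2
      · subst h'
        rw [show c3 = C ⟨s(Sum.inr X₂, Sum.inl a₂), hE3.symm⟩ from
          congrArg C (Subtype.ext Sym2.eq_swap)]
        exact hC' (Sum.inr X₂) (Sum.inl a₂) (Sum.inr ⟨w₂, hw⟩) hE3.symm hm (by simp)
    have ho4 : ∀ v w₁ w₂ : V₂, G₂.Adj v w₂ → s(v, w₁) = s(b₃, y₂) →
        s(v, w₂) ≠ s(a₃, b₃) → s(v, w₂) ≠ s(a₃, x₁) → s(v, w₂) ≠ s(a₃, y₁) →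
        s(v, w₂) ≠ s(b₃, x₂) → s(v, w₂) ≠ s(b₃, y₂) → g s(v, w₁) ≠ g s(v, w₂) := by
      intro v w₁ w₂ h2 e1 n0 n1 n2 n3 n4
      obtain ⟨hv, hw, hm, hval⟩ := gord v w₂ h2 n0 n1 n2 n3 n4
      rw [hval4 v w₁ e1, hval]
      rcases Sym2.eq_iff.1 e1 with ⟨h', _⟩ | ⟨h', _⟩
      · exact absurd h' hv.2
      · subst h'
        rw [show c4 = C ⟨s(Sum.inr Y₂, Sum.inl b₂), hE4.symm⟩ from
          congrArg C (Subtype.ext Sym2.eq_swap)]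
        exact hC' (Sum.inr Y₂) (Sum.inl b₂) (Sum.inr ⟨w₂, hw⟩) hE4.symm hm (by simp)
    have main : ∀ (v w₁ w₂ : V₂), G₂.Adj v w₁ → G₂.Adj v w₂ → w₁ ≠ w₂ →
        g s(v, w₁) ≠ g s(v, w₂) := by
      intro v w₁ w₂ h1 h2 hne
      have hneq : s(v, w₁) ≠ s(v, w₂) := fun h => hne (Sym2.congr_right.1 h)
      by_cases e10 : s(v, w₁) = s(a₃, b₃)
      · by_cases e20 : s(v, w₂) = s(a₃, b₃)
        · exact absurd (e10.trans e20.symm) hneq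
        by_cases e21 : s(v, w₂) = s(a₃, x₁)
        · rw [hval0 v w₁ e10, hval1 v w₂ e21]; exact hc01
        by_cases e22 : s(v, w₂) = s(a₃, y₁)
        · rw [hval0 v w₁ e10, hval2 v w₂ e22]; exact hc02
        by_cases e23 : s(v, w₂) = s(b₃, x₂)
        · rw [hval0 v w₁ e10, hval3 v w₂ e23]; exact hc03
        by_cases e24 : s(v, w₂) = s(b₃, y₂)
        · rw [hval0 v w₁ e10, hval4 v w₂ e24]; exact hc04
        · exact (ho0 v w₁ w₂ h2 e10 e20 e21 e22 e23 e24).elim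
      by_cases e11 : s(v, w₁) = s(a₃, x₁)
      · by_cases e20 : s(v, w₂) = s(a₃, b₃)
        · rw [hval1 v w₁ e11, hval0 v w₂ e20]; exact hc01.symm
        by_cases e21 : s(v, w₂) = s(a₃, x₁)
        · exact absurd (e11.trans e21.symm) hneq
        by_cases e22 : s(v, w₂) = s(a₃, y₁)
        · rw [hval1 v w₁ e11, hval2 v w₂ e22]; exact h12
        by_cases e23 : s(v, w₂) = s(b₃, x₂)
        · rw [hval1 v w₁ e11, hval3 v w₂ e23]; exact h13 v w₁ w₂ e11 e23
        by_cases e24 : s(v, w₂) = s(b₃, y₂)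
        · rw [hval1 v w₁ e11, hval4 v w₂ e24]; exact h14 v w₁ w₂ e11 e24
        · exact ho1 v w₁ w₂ h2 e11 e20 e21 e22 e23 e24
      by_cases e12 : s(v, w₁) = s(a₃, y₁)
      · by_cases e20 : s(v, w₂) = s(a₃, b₃)
        · rw [hval2 v w₁ e12, hval0 v w₂ e20]; exact hc02.symm
        by_cases e21 : s(v, w₂) = s(a₃, x₁)
        · rw [hval2 v w₁ e12, hval1 v w₂ e21]; exact h12.symm
        by_cases e22 : s(v, w₂) = s(a₃, y₁)
        · exact absurd (e12.trans e22.symm) hneq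
        by_cases e23 : s(v, w₂) = s(b₃, x₂)
        · rw [hval2 v w₁ e12, hval3 v w₂ e23]; exact h23 v w₁ w₂ e12 e23
        by_cases e24 : s(v, w₂) = s(b₃, y₂)
        · rw [hval2 v w₁ e12, hval4 v w₂ e24]; exact h24 v w₁ w₂ e12 e24
        · exact ho2 v w₁ w₂ h2 e12 e20 e21 e22 e23 e24
      by_cases e13 : s(v, w₁) = s(b₃, x₂)
      · by_cases e20 : s(v, w₂) = s(a₃, b₃)
        · rw [hval3 v w₁ e13, hval0 v w₂ e20]; exact hc03.symm
        by_cases e21 : s(v, w₂) = s(a₃, x₁)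
        · rw [hval3 v w₁ e13, hval1 v w₂ e21]; exact (h13 v w₂ w₁ e21 e13).symm
        by_cases e22 : s(v, w₂) = s(a₃, y₁)
        · rw [hval3 v w₁ e13, hval2 v w₂ e22]; exact (h23 v w₂ w₁ e22 e13).symm
        by_cases e23 : s(v, w₂) = s(b₃, x₂)
        · exact absurd (e13.trans e23.symm) hneq
        by_cases e24 : s(v, w₂) = s(b₃, y₂)
        · rw [hval3 v w₁ e13, hval4 v w₂ e24]; exact h34
        · exact ho3 v w₁ w₂ h2 e13 e20 e21 e22 e23 e24
      by_cases e14 : s(v, w₁) = s(b₃, y₂)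
      · by_cases e20 : s(v, w₂) = s(a₃, b₃)
        · rw [hval4 v w₁ e14, hval0 v w₂ e20]; exact hc04.symm
        by_cases e21 : s(v, w₂) = s(a₃, x₁)
        · rw [hval4 v w₁ e14, hval1 v w₂ e21]; exact (h14 v w₂ w₁ e21 e14).symm
        by_cases e22 : s(v, w₂) = s(a₃, y₁)
        · rw [hval4 v w₁ e14, hval2 v w₂ e22]; exact (h24 v w₂ w₁ e22 e14).symm
        by_cases e23 : s(v, w₂) = s(b₃, x₂)
        · rw [hval4 v w₁ e14, hval3 v w₂ e23]; exact h34.symm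
        by_cases e24 : s(v, w₂) = s(b₃, y₂)
        · exact absurd (e14.trans e24.symm) hneq
        · exact ho4 v w₁ w₂ h2 e14 e20 e21 e22 e23 e24
      · by_cases e20 : s(v, w₂) = s(a₃, b₃)
        · exact (ho0 v w₂ w₁ h1 e20 e10 e11 e12 e13 e14).elim
        by_cases e21 : s(v, w₂) = s(a₃, x₁)
        · exact (ho1 v w₂ w₁ h1 e21 e10 e11 e12 e13 e14).symm
        by_cases e22 : s(v, w₂) = s(a₃, y₁)
        · exact (ho2 v w₂ w₁ h1 e22 e10 e11 e12 e13 e14).symm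
        by_cases e23 : s(v, w₂) = s(b₃, x₂)
        · exact (ho3 v w₂ w₁ h1 e23 e10 e11 e12 e13 e14).symm
        by_cases e24 : s(v, w₂) = s(b₃, y₂)
        · exact (ho4 v w₂ w₁ h1 e24 e10 e11 e12 e13 e14).symm
        · obtain ⟨hv1', hw1', hm1, hval1'⟩ := gord v w₁ h1 e10 e11 e12 e13 e14
          obtain ⟨hv2', hw2', hm2, hval2'⟩ := gord v w₂ h2 e20 e21 e22 e23 e24
          rw [hval1', hval2']
          refine hC' _ _ _ hm1 hm2 ?_
          intro h
          exact hne (congrArg Subtype.val (Sum.inr.inj h))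
    refine ⟨fun e => g e.1, ?_⟩
    rintro e₁ e₂ hnee ⟨v, hv1, hv2⟩
    obtain ⟨w₁, hw₁⟩ := Sym2.mem_iff_exists.1 hv1
    obtain ⟨w₂, hw₂⟩ := Sym2.mem_iff_exists.1 hv2
    have hadj₁ : G₂.Adj v w₁ := by
      have h := e₁.2; rw [hw₁] at h; exact h
    have hadj₂ : G₂.Adj v w₂ := by
      have h := e₂.2; rw [hw₂] at h; exact h
    have hww : w₁ ≠ w₂ := by
      intro h; exact hnee (Subtype.ext (by rw [hw₁, hw₂, h]))
    show g (e₁ : Sym2 V₂) ≠ g (e₂ : Sym2 V₂)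
    rw [hw₁, hw₂]
    exact main v w₁ w₂ hadj₁ hadj₂ hww
end
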